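/- Let M ∈ so(n, ℂ). Consider the bilinear form Λ_1 on gl(n,ℂ) = so(n,ℂ) ⊕ Sym(n,ℂ) given at the point M by Λ_1(ξ_1 + η_1, ξ_2 + η_2) = −⟨M, [ξ_1, ξ_2] + [ξ_1, η_2] + [η_1, ξ_2]⟩, where ξ_i ∈ so(n,ℂ), η_i ∈ Sym(n,ℂ) and ⟨X,Y⟩ = −(1/2)tr(XY). Then the kernel of Λ_1 at M equals so(n,ℂ)_M ⊕ Sym(n,ℂ), where so(n,ℂ)_M = {ξ ∈ so(n,ℂ) : [ξ, M] = 0} is the centralizer of M in so(n,ℂ). Explicitly: ξ + η (with ξ skew, η symmetric) satisfies Λ_1(ξ + η, ζ) = 0 for all ζ ∈ gl(n,ℂ) if and only if [M, ξ] = 0. -/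

import Mathlib

open Matrix

/-- The pairing `⟨X, Y⟩ = −(1/2)·tr(XY)` on `gl(n, ℂ)`. -/
noncomputable def glPairing {n : ℕ} (X Y : Matrix (Fin n) (Fin n) ℂ) : ℂ :=
  -(1 / 2 : ℂ) * (X * Y).trace

/-- The Poisson bivector `Λ₁` of the symmetric pair `gl(n,ℂ) = so(n,ℂ) ⊕ Sym(n,ℂ)`
evaluated at the point `M`, on cotangent directions `ξ₁ + η₁` and `ξ₂ + η₂` with
`ξᵢ` skew and `ηᵢ` symmetric:
`Λ₁(ξ₁ + η₁, ξ₂ + η₂) = −⟨M, [ξ₁, ξ₂] + [ξ₁, η₂] + [η₁, ξ₂]⟩`. -/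
noncomputable def Lambda1 {n : ℕ} (M ξ₁ η₁ ξ₂ η₂ : Matrix (Fin n) (Fin n) ℂ) : ℂ :=
  -glPairing M ((ξ₁ * ξ₂ - ξ₂ * ξ₁) + (ξ₁ * η₂ - η₂ * ξ₁) + (η₁ * ξ₂ - ξ₂ * η₁))


lemma tr_aux1 (n : ℕ) (M η ζ : Matrix (Fin n) (Fin n) ℂ) (hM : Mᵀ = -M) (hη : ηᵀ = η) :
    (M * (η * ζᵀ)).trace = -(M * (ζ * η)).trace := by
  rw [← trace_transpose (M * (η * ζᵀ))]
  simp only [transpose_mul, transpose_transpose, hM, hη, Matrix.mul_neg, Matrix.neg_mul,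
    trace_neg]
  rw [trace_mul_comm, ← mul_assoc, mul_assoc]

lemma tr_aux2 (n : ℕ) (M η ζ : Matrix (Fin n) (Fin n) ℂ) (hM : Mᵀ = -M) (hη : ηᵀ = η) :
    (M * (ζᵀ * η)).trace = -(M * (η * ζ)).trace := by
  rw [← trace_transpose (M * (ζᵀ * η))]
  simp only [transpose_mul, transpose_transpose, hM, hη, Matrix.mul_neg, Matrix.neg_mul,
    trace_neg]
  rw [trace_mul_comm, ← mul_assoc, mul_assoc]

lemma lambda1_key (n : ℕ) (M : Matrix (Fin n) (Fin n) ℂ) (hM : Mᵀ = -M)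
    (ξ η ζ : Matrix (Fin n) (Fin n) ℂ) (hη : ηᵀ = η) :
    Lambda1 M ξ η ((1 / 2 : ℂ) • (ζ - ζᵀ)) ((1 / 2 : ℂ) • (ζ + ζᵀ))
      = (1 / 2 : ℂ) * ((M * ξ - ξ * M) * ζ).trace := by
  unfold Lambda1 glPairing
  simp only [Matrix.mul_smul, Matrix.smul_mul, Matrix.mul_add, Matrix.add_mul,
    Matrix.mul_sub, Matrix.sub_mul, smul_sub, smul_add, ← smul_sub, ← smul_add,
    trace_smul, trace_add, trace_sub, smul_eq_mul]
  have h1 := tr_aux1 n M η ζ hM hη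
  have h2 := tr_aux2 n M η ζ hM hη
  have c1 : (M * (ζ * ξ)).trace = (ξ * M * ζ).trace := by
    rw [← mul_assoc, trace_mul_cycle]
  have c2 : (M * (ξ * ζ)).trace = (M * ξ * ζ).trace := by rw [mul_assoc]
  rw [h1, h2, c1, c2]
  ring

/-- For `M ∈ so(n, ℂ)`, the kernel of `Λ₁` at `M` equals
`so(n,ℂ)_M ⊕ Sym(n,ℂ)`: an element `ξ + η` (with `ξ` skew, `η` symmetric) satisfies
`Λ₁(ξ + η, ζ) = 0` for all `ζ ∈ gl(n, ℂ)` (decomposed as `ζ = ζ₁ + ζ₂`, skew plus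
symmetric part) if and only if `[M, ξ] = 0`. -/
theorem lambda1_kernel (n : ℕ) (M : Matrix (Fin n) (Fin n) ℂ) (hM : Mᵀ = -M)
    (ξ η : Matrix (Fin n) (Fin n) ℂ) (hξ : ξᵀ = -ξ) (hη : ηᵀ = η) :
    (∀ ζ : Matrix (Fin n) (Fin n) ℂ,
        Lambda1 M ξ η ((1 / 2 : ℂ) • (ζ - ζᵀ)) ((1 / 2 : ℂ) • (ζ + ζᵀ)) = 0)
      ↔ M * ξ - ξ * M = 0 := by
  constructor
  · intro h
    ext i j
    have h1 := h (single j i 1)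
    rw [lambda1_key n M hM ξ η _ hη] at h1
    have h2 : ((M * ξ - ξ * M) * single j i 1).trace = 0 := by
      field_simp at h1
      simpa only [mul_zero] using h1
    have h3 : ((M * ξ - ξ * M) * single j i 1).trace = (M * ξ - ξ * M) i j := by
      simp [Matrix.trace, Matrix.diag, Matrix.mul_apply, Matrix.single, ite_and,
        Finset.sum_ite_eq]
    rw [h3] at h2
    simpa using h2
  · intro h ζ
    rw [lambda1_key n M hM ξ η ζ hη, h]
    simp
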